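/- Let n = p_1^{α_1}···p_r^{α_r} with r ≥ 2 distinct primes, fix 1 ≤ k ≤ r, and let 1 ≤ β < γ ≤ α_k. If x,y ∈ C_n have orders p_k^β and p_k^γ respectively, then |N([x])| > |N([y])| in the power graph of C_n. Equivalently, (p_k^β − 2φ(p_k^β) + (p_k^{α_k} − p_k^{β−1})∏_{j≠k} p_j^{α_j}) − (p_k^γ − 2φ(p_k^γ) + (p_k^{α_k} − p_k^{γ−1})∏_{j≠k} p_j^{α_j}) = (p_k^{γ−1} − p_k^{β−1})(p_k − 2 + ∏_{j≠k} p_j^{α_j}) > 0. -/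

import Mathlib

/-- The power graph of a group: distinct vertices are adjacent iff
one is a power of the other. -/
def powerGraph (G : Type*) [Group G] : SimpleGraph G where
  Adj x y := x ≠ y ∧ (x ∈ Subgroup.zpowers y ∨ y ∈ Subgroup.zpowers x)
  symm := ⟨fun x y h => ⟨h.1.symm, h.2.symm⟩⟩
  loopless := ⟨fun x hx => hx.1 rfl⟩

/-- `v` lies in a connected component containing a cycle. -/
def InCyclicComp {V : Type*} (Γ : SimpleGraph V) (v : V) : Prop :=
  ∃ w, Γ.Reachable v w ∧ ∃ c : Γ.Walk w w, c.IsCycle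

/-- `S` is a cyclic vertex cutset: `Γ - S` is disconnected with at least two
components containing cycles. -/
def IsCyclicCutset {V : Type*} (Γ : SimpleGraph V) (S : Set V) : Prop :=
  ∃ u v : ↥(Sᶜ), ¬ (Γ.induce Sᶜ).Reachable u v ∧
    InCyclicComp (Γ.induce Sᶜ) u ∧ InCyclicComp (Γ.induce Sᶜ) v

/-- A graph is cyclically separable if it has a cyclic vertex cutset. -/
def CyclicallySeparable {V : Type*} (Γ : SimpleGraph V) : Prop :=
  ∃ S : Set V, IsCyclicCutset Γ S

/-- Vertex connectivity: the least number of vertices whose deletion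
disconnects the graph or reduces it to at most one vertex. -/
noncomputable def vertexConn {V : Type*} (Γ : SimpleGraph V) : ℕ :=
  sInf {k | ∃ S : Set V, S.ncard = k ∧
    (¬ (Γ.induce Sᶜ).Connected ∨ Sᶜ.Subsingleton)}

/-- Cyclic vertex connectivity: the least cardinality of a cyclic vertex
cutset, `∞` if there is none. -/
noncomputable def cyclicVertexConn {V : Type*} (Γ : SimpleGraph V) : ℕ∞ :=
  sInf {k : ℕ∞ | ∃ S : Set V, IsCyclicCutset Γ S ∧ k = (S.ncard : ℕ∞)}

/-- `genClass x` is `[x]`, the set of generators of `⟨x⟩`. -/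
def genClass {G : Type*} [Group G] (x : G) : Set G :=
  {y | Subgroup.zpowers y = Subgroup.zpowers x}

/-- Neighbourhood of a set of vertices. -/
def setNbhd {V : Type*} (Γ : SimpleGraph V) (A : Set V) : Set V :=
  {v | v ∉ A ∧ ∃ a ∈ A, Γ.Adj v a}


section Aux
open Subgroup

variable {G : Type*} [Group G] [Fintype G] [IsCyclic G]

lemma my_mem_zpowers_iff_orderOf_dvd {a b : G} :
    a ∈ zpowers b ↔ orderOf a ∣ orderOf b := by
  classical
  constructor
  · exact orderOf_dvd_of_mem_zpowers
  · intro h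
    have hb : 0 < orderOf b := orderOf_pos b
    set T : Finset G := Finset.univ.filter (· ∈ zpowers b) with hT
    set S : Finset G := Finset.univ.filter (fun x => x ^ orderOf b = 1) with hS
    have hTS : T ⊆ S := by
      intro x hx
      simp only [hT, Finset.mem_filter, Finset.mem_univ, true_and] at hx
      simp only [hS, Finset.mem_filter, Finset.mem_univ, true_and]
      exact orderOf_dvd_iff_pow_eq_one.mp (orderOf_dvd_of_mem_zpowers hx)
    have hTcard : T.card = orderOf b := by
      rw [hT, ← Fintype.card_zpowers (x := b)]
      simp [Fintype.card_subtype]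
    have hScard : S.card ≤ orderOf b := IsCyclic.card_pow_eq_one_le hb
    have hST : S = T := (Finset.eq_of_subset_of_card_le hTS (by omega)).symm
    have haS : a ∈ S := by
      simp only [hS, Finset.mem_filter, Finset.mem_univ, true_and]
      exact orderOf_dvd_iff_pow_eq_one.mp h
    rw [hST] at haS
    simpa only [hT, Finset.mem_filter, Finset.mem_univ, true_and] using haS

lemma my_zpowers_eq_iff {a b : G} :
    zpowers a = zpowers b ↔ orderOf a = orderOf b := by
  constructor
  · intro h
    exact Nat.dvd_antisymm
      (my_mem_zpowers_iff_orderOf_dvd.mp (h ▸ mem_zpowers a))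
      (my_mem_zpowers_iff_orderOf_dvd.mp (h ▸ mem_zpowers b))
  · intro h
    exact le_antisymm
      (zpowers_le.mpr (my_mem_zpowers_iff_orderOf_dvd.mpr h.dvd))
      (zpowers_le.mpr (my_mem_zpowers_iff_orderOf_dvd.mpr h.symm.dvd))

lemma my_setNbhd_eq (x : G) :
    setNbhd (powerGraph G) (genClass x) =
      {v | orderOf v ≠ orderOf x ∧ (orderOf v ∣ orderOf x ∨ orderOf x ∣ orderOf v)} := by
  ext v
  simp only [setNbhd, genClass, Set.mem_setOf_eq]
  constructor
  · rintro ⟨hv, a, ha, hne, hadj⟩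
    refine ⟨fun h => hv (my_zpowers_eq_iff.mpr h), ?_⟩
    rcases hadj with h | h
    · have := my_mem_zpowers_iff_orderOf_dvd.mp (ha ▸ h)
      exact Or.inl this
    · exact Or.inr ((my_zpowers_eq_iff.mp ha) ▸ orderOf_dvd_of_mem_zpowers h)
  · rintro ⟨hne, hdvd⟩
    refine ⟨fun h => hne (my_zpowers_eq_iff.mp h), x, rfl, fun h => hne (by rw [h]), ?_⟩
    rcases hdvd with h | h
    · exact Or.inl (my_mem_zpowers_iff_orderOf_dvd.mpr h)
    · exact Or.inr (my_mem_zpowers_iff_orderOf_dvd.mpr h)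

lemma my_card_orderOf_eq {d : ℕ} (hd : d ∣ Fintype.card G) :
    {v : G | orderOf v = d}.ncard = d.totient := by
  classical
  have : {v : G | orderOf v = d} = ↑(Finset.univ.filter fun v : G => orderOf v = d) := by
    ext v; simp
  rw [this, Set.ncard_coe_finset, IsCyclic.card_orderOf_eq_totient hd]

end Aux

/-- Comparison of neighbourhood sizes for elements of orders p_k^β and p_k^γ. -/
theorem stmt4 (n r : ℕ) [NeZero n] (hr : 2 ≤ r) (p α : Fin r → ℕ)
    (hp : ∀ i, (p i).Prime) (hmono : StrictMono p) (hα : ∀ i, 1 ≤ α i)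
    (hn : n = ∏ i, p i ^ α i)
    (k : Fin r) (β γ : ℕ) (hβ : 1 ≤ β) (hβγ : β < γ) (hγ : γ ≤ α k)
    (x y : Multiplicative (ZMod n))
    (hx : orderOf x = p k ^ β) (hy : orderOf y = p k ^ γ) :
    (setNbhd (powerGraph (Multiplicative (ZMod n))) (genClass y)).ncard
      < (setNbhd (powerGraph (Multiplicative (ZMod n))) (genClass x)).ncard ∧
    (((p k ^ β : ℤ) - 2 * Nat.totient (p k ^ β)
        + ((p k : ℤ) ^ α k - (p k : ℤ) ^ (β - 1)) *
            (∏ j ∈ Finset.univ.erase k, (p j : ℤ) ^ α j))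
      - ((p k ^ γ : ℤ) - 2 * Nat.totient (p k ^ γ)
        + ((p k : ℤ) ^ α k - (p k : ℤ) ^ (γ - 1)) *
            (∏ j ∈ Finset.univ.erase k, (p j : ℤ) ^ α j))
      = ((p k : ℤ) ^ (γ - 1) - (p k : ℤ) ^ (β - 1)) *
          ((p k : ℤ) - 2 + ∏ j ∈ Finset.univ.erase k, (p j : ℤ) ^ α j)) ∧
    0 < ((p k : ℤ) ^ (γ - 1) - (p k : ℤ) ^ (β - 1)) *
          ((p k : ℤ) - 2 + ∏ j ∈ Finset.univ.erase k, (p j : ℤ) ^ α j) := by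
  have hpk := hp k
  have hp2 : 2 ≤ p k := hpk.two_le
  obtain ⟨β', rfl⟩ : ∃ b, β = b + 1 := ⟨β - 1, by omega⟩
  obtain ⟨γ', rfl⟩ : ∃ g, γ = g + 1 := ⟨γ - 1, by omega⟩
  have hβγ' : β' < γ' := by omega
  have hppow_lt : p k ^ (β' + 1) < p k ^ (γ' + 1) :=
    Nat.pow_lt_pow_right (by omega) (by omega)
  have hne_pow : p k ^ (β' + 1) ≠ p k ^ (γ' + 1) := hppow_lt.ne
  -- the arithmetic parts
  have hq : (((p k ^ (β' + 1) : ℤ) - 2 * Nat.totient (p k ^ (β' + 1))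
        + ((p k : ℤ) ^ α k - (p k : ℤ) ^ (β' + 1 - 1)) *
            (∏ j ∈ Finset.univ.erase k, (p j : ℤ) ^ α j))
      - ((p k ^ (γ' + 1) : ℤ) - 2 * Nat.totient (p k ^ (γ' + 1))
        + ((p k : ℤ) ^ α k - (p k : ℤ) ^ (γ' + 1 - 1)) *
            (∏ j ∈ Finset.univ.erase k, (p j : ℤ) ^ α j))
      = ((p k : ℤ) ^ (γ' + 1 - 1) - (p k : ℤ) ^ (β' + 1 - 1)) *
          ((p k : ℤ) - 2 + ∏ j ∈ Finset.univ.erase k, (p j : ℤ) ^ α j)) := by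
    rw [Nat.totient_prime_pow hpk (Nat.succ_pos β'), Nat.totient_prime_pow hpk (Nat.succ_pos γ')]
    simp only [Nat.add_sub_cancel]
    push_cast [Nat.cast_sub (by omega : 1 ≤ p k)]
    ring
  have hP1 : (1 : ℤ) ≤ ∏ j ∈ Finset.univ.erase k, (p j : ℤ) ^ α j := by
    have h0 : 0 < ∏ j ∈ Finset.univ.erase k, (p j : ℤ) ^ α j := by
      apply Finset.prod_pos
      intro j _
      exact pow_pos (by exact_mod_cast (hp j).pos) _
    omega
  have hpos : 0 < ((p k : ℤ) ^ (γ' + 1 - 1) - (p k : ℤ) ^ (β' + 1 - 1)) *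
          ((p k : ℤ) - 2 + ∏ j ∈ Finset.univ.erase k, (p j : ℤ) ^ α j) := by
    apply mul_pos
    · simp only [Nat.add_sub_cancel]
      have : (p k : ℤ) ^ β' < (p k : ℤ) ^ γ' := by
        apply pow_lt_pow_right₀ (by exact_mod_cast (by omega : 1 < p k)) hβγ'
      linarith
    · have : (2 : ℤ) ≤ (p k : ℤ) := by exact_mod_cast hp2
      linarith
  -- the combinatorial part
  refine ⟨?_, hq, hpos⟩
  classical
  have hcard : Fintype.card (Multiplicative (ZMod n)) = n := by simp [ZMod.card]
  have hdvd_n : ∀ s : ℕ, s ≤ α k → p k ^ s ∣ n := by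
    intro s hs
    rw [hn]
    exact dvd_trans (pow_dvd_pow _ hs) (Finset.dvd_prod_of_mem _ (Finset.mem_univ k))
  set A : Set (Multiplicative (ZMod n)) := {v | orderOf v ≠ p k ^ (β' + 1) ∧
      (orderOf v ∣ p k ^ (β' + 1) ∨ p k ^ (β' + 1) ∣ orderOf v)} with hAdef
  set B : Set (Multiplicative (ZMod n)) := {v | orderOf v ≠ p k ^ (γ' + 1) ∧
      (orderOf v ∣ p k ^ (γ' + 1) ∨ p k ^ (γ' + 1) ∣ orderOf v)} with hBdef
  have hAx : setNbhd (powerGraph (Multiplicative (ZMod n))) (genClass x) = A := by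
    rw [my_setNbhd_eq, hx]
  have hBy : setNbhd (powerGraph (Multiplicative (ZMod n))) (genClass y) = B := by
    rw [my_setNbhd_eq, hy]
  rw [hAx, hBy]
  -- B \ A = elements of order p^β
  have hBA : B \ A = {v : Multiplicative (ZMod n) | orderOf v = p k ^ (β' + 1)} := by
    ext v
    simp only [Set.mem_diff, hAdef, hBdef, Set.mem_setOf_eq]
    constructor
    · rintro ⟨⟨hneγ, hdvdγ⟩, hnotA⟩
      by_contra hne
      apply hnotA
      refine ⟨hne, ?_⟩
      rcases hdvdγ with h | h
      · obtain ⟨i, hi, hvi⟩ := (Nat.dvd_prime_pow hpk).mp h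
        rcases le_or_gt i (β' + 1) with hle | hlt
        · exact Or.inl (hvi ▸ pow_dvd_pow _ hle)
        · exact Or.inr (hvi ▸ pow_dvd_pow _ (by omega))
      · exact Or.inr (dvd_trans (pow_dvd_pow _ (by omega : β' + 1 ≤ γ' + 1)) h)
    · intro h
      refine ⟨⟨h ▸ hne_pow, Or.inl (h ▸ pow_dvd_pow _ (by omega : β' + 1 ≤ γ' + 1))⟩, ?_⟩
      intro ⟨hne, _⟩
      exact hne h
  -- elements of order p^γ lie in A \ B
  have hEγ : {v : Multiplicative (ZMod n) | orderOf v = p k ^ (γ' + 1)} ⊆ A \ B := by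
    intro v hv
    simp only [Set.mem_setOf_eq] at hv
    constructor
    · exact ⟨hv ▸ hne_pow.symm, Or.inr (hv ▸ pow_dvd_pow _ (by omega : β' + 1 ≤ γ' + 1))⟩
    · intro ⟨hne, _⟩
      exact hne hv
  have hcβ : {v : Multiplicative (ZMod n) | orderOf v = p k ^ (β' + 1)}.ncard = (p k ^ (β' + 1)).totient :=
    my_card_orderOf_eq (by rw [hcard]; exact hdvd_n _ (by omega))
  have hcγ : {v : Multiplicative (ZMod n) | orderOf v = p k ^ (γ' + 1)}.ncard = (p k ^ (γ' + 1)).totient :=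
    my_card_orderOf_eq (by rw [hcard]; exact hdvd_n _ hγ)
  have htot_lt : (p k ^ (β' + 1)).totient < (p k ^ (γ' + 1)).totient := by
    rw [Nat.totient_prime_pow hpk (Nat.succ_pos β'), Nat.totient_prime_pow hpk (Nat.succ_pos γ')]
    have hlt : p k ^ (β' + 1 - 1) < p k ^ (γ' + 1 - 1) :=
      Nat.pow_lt_pow_right (by omega) (by omega)
    have hpm1 : 0 < p k - 1 := by omega
    exact Nat.mul_lt_mul_of_lt_of_le hlt (le_refl _) hpm1
  have h1 : (B ∩ A).ncard + (B \ A).ncard = B.ncard :=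
    Set.ncard_inter_add_ncard_diff_eq_ncard B A (Set.toFinite B)
  have h2 : (A ∩ B).ncard + (A \ B).ncard = A.ncard :=
    Set.ncard_inter_add_ncard_diff_eq_ncard A B (Set.toFinite A)
  have h3 : (A ∩ B).ncard = (B ∩ A).ncard := by rw [Set.inter_comm]
  have h4 : (p k ^ (γ' + 1)).totient ≤ (A \ B).ncard := by
    rw [← hcγ]
    exact Set.ncard_le_ncard hEγ (Set.toFinite _)
  have h5 : (B \ A).ncard = (p k ^ (β' + 1)).totient := by rw [hBA, hcβ]
  omega
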